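/- (Proposition 5.1 for type B) Fix n ≥ 1 and a vertex x = (p,r) of the valued translation quiver Q realizing ℤB_{n+1}. Then: (i) for every vertex y and every 1 ≤ k ≤ 2n, h'_k(y,x) ≥ 0 (hence h_k(y,x) = h'_k(y,x)); (ii) h_{2n}(y,x) = 1 if y = (p−n, r) and h_{2n}(y,x) = 0 otherwise; (iii) h_k(y,x) = 0 for every vertex y and every k > 2n. -/

import Mathlib

set_option maxHeartbeats 3200000


/-- Valued sum over the arrows `y → v` of the valued translation quiver realizing
`ℤB_{n+1}`: the vertex set is `ℤ × {0,…,n}`, with arrows `(q,s) → (q,s+1)` for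
`s < n` and `(q,s) → (q+1,s-1)` for `0 < s`; each arrow `(q,n-1) → (q,n)` carries
valuation `(2,1)` and each arrow `(q,n) → (q+1,n-1)` carries valuation `(1,2)`,
all other arrows carry valuation `(1,1)`. Here each summand `f v` is weighted
by the first component of the valuation of the arrow `y → v`. -/
def stepB (n : ℕ) (f : ℤ × ℕ → ℕ) (y : ℤ × ℕ) : ℤ :=
  (if y.2 < n then (if y.2 = n - 1 then 2 else 1) * (f (y.1, y.2 + 1) : ℤ) else 0) +
    (if 0 < y.2 then (f (y.1 + 1, y.2 - 1) : ℤ) else 0)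

/-- `hB n x k y` is `h_k(y,x)` for `ℤB_{n+1}`: `h_0(y,x) = δ(y,x)` and, for `k > 0`,
`h_k(y,x) = max(h'_k(y,x), 0)` where
`h'_k(y,x) = ∑_{α : y → v} d_α · h_{k-1}(v,x) - h_{k-2}(τ⁻¹ y, x)` and
`τ⁻¹(q,s) = (q+1,s)`. -/
def hB (n : ℕ) (x : ℤ × ℕ) : ℕ → ℤ × ℕ → ℕ
  | 0 => fun y => if y = x then 1 else 0
  | 1 => fun y => (stepB n (hB n x 0) y).toNat
  | k + 2 => fun y =>
      (stepB n (hB n x (k + 1)) y - (hB n x k (y.1 + 1, y.2) : ℤ)).toNat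

/-- `h'B n x k y` is `h'_k(y,x)` for `ℤB_{n+1}` (meaningful for `k ≥ 1`). -/
def h'B (n : ℕ) (x : ℤ × ℕ) (k : ℕ) (y : ℤ × ℕ) : ℤ :=
  stepB n (hB n x (k - 1)) y -
    (if 2 ≤ k then (hB n x (k - 2) (y.1 + 1, y.2) : ℤ) else 0)

/-- `hTotB n y x = h(y,x) = ∑_{k ≥ 0} h_k(y,x)` for `ℤB_{n+1}`. -/
noncomputable def hTotB (n : ℕ) (y x : ℤ × ℕ) : ℕ := ∑ᶠ k : ℕ, hB n x k y

/-! ### Auxiliary: the `ℤA_{2n+1}` hammock indicator and the folded closed formula -/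

/-- Hammock condition for `ℤA_{2n+1}` with source `(p,r)`. -/
def condZB (n p r k q s : ℤ) : Prop :=
  0 ≤ p - q ∧ p - q ≤ k ∧ s = r + 2 * (p - q) - k ∧ p - q ≤ 2 * n - r ∧
    k - (p - q) ≤ r

instance condZB.dec (n p r k q s : ℤ) : Decidable (condZB n p r k q s) := by
  unfold condZB; infer_instance

/-- Indicator of the hammock condition. -/
def A1ZB (n p r k q s : ℤ) : ℤ := if condZB n p r k q s then 1 else 0

lemma A1ZB_spec (n p r k q s : ℤ) :
    (A1ZB n p r k q s = 1 ∧
      (0 ≤ p - q ∧ p - q ≤ k ∧ s = r + 2 * (p - q) - k ∧ p - q ≤ 2 * n - r ∧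
        k - (p - q) ≤ r)) ∨
    (A1ZB n p r k q s = 0 ∧
      ¬(0 ≤ p - q ∧ p - q ≤ k ∧ s = r + 2 * (p - q) - k ∧ p - q ≤ 2 * n - r ∧
        k - (p - q) ≤ r)) := by
  unfold A1ZB
  split
  · exact Or.inl ⟨rfl, by assumption⟩
  · exact Or.inr ⟨rfl, by assumption⟩

lemma A1ZB_nonneg (n p r k q s : ℤ) : 0 ≤ A1ZB n p r k q s := by
  unfold A1ZB; split <;> omega

/-- The mesh recursion for the `ℤA_{2n+1}` hammock indicator, degree-one case. -/
lemma keyA0 (n : ℕ) (p r : ℤ) (hr0 : 0 ≤ r) (hr2 : r ≤ 2 * (n : ℤ)) (q s : ℤ)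
    (hs0 : 0 ≤ s) (hs2 : s ≤ 2 * (n : ℤ)) :
    (if s < 2 * (n : ℤ) then A1ZB n p r 0 q (s + 1) else 0) +
      (if 0 < s then A1ZB n p r 0 (q + 1) (s - 1) else 0) = A1ZB n p r 1 q s := by
  by_cases hd : s = r + 2 * (p - q) - 1
  · have h1 : A1ZB (n : ℤ) p r 0 q (s + 1) = 1 ∧ p - q = 0 ∨
        A1ZB (n : ℤ) p r 0 q (s + 1) = 0 ∧ ¬(p - q = 0) := by
      rcases A1ZB_spec (n : ℤ) p r 0 q (s + 1) with ⟨h, hc⟩ | ⟨h, hc⟩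
      · exact Or.inl ⟨h, by omega⟩
      · by_cases hc2 : p - q = 0
        · exact absurd ⟨by omega, by omega, by omega, by omega, by omega⟩ hc
        · exact Or.inr ⟨h, hc2⟩
    have h2 : A1ZB (n : ℤ) p r 0 (q + 1) (s - 1) = 1 ∧ p - q = 1 ∨
        A1ZB (n : ℤ) p r 0 (q + 1) (s - 1) = 0 ∧ ¬(p - q = 1) := by
      rcases A1ZB_spec (n : ℤ) p r 0 (q + 1) (s - 1) with ⟨h, hc⟩ | ⟨h, hc⟩
      · exact Or.inl ⟨h, by omega⟩
      · by_cases hc2 : p - q = 1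
        · exact absurd ⟨by omega, by omega, by omega, by omega, by omega⟩ hc
        · exact Or.inr ⟨h, hc2⟩
    have h3 : A1ZB (n : ℤ) p r 1 q s = 1 ∧
          (0 ≤ p - q ∧ p - q ≤ 1 ∧ p - q ≤ 2 * (n : ℤ) - r ∧ 1 - (p - q) ≤ r) ∨
        A1ZB (n : ℤ) p r 1 q s = 0 ∧
          ¬(0 ≤ p - q ∧ p - q ≤ 1 ∧ p - q ≤ 2 * (n : ℤ) - r ∧ 1 - (p - q) ≤ r) := by
      rcases A1ZB_spec (n : ℤ) p r 1 q s with ⟨h, hc⟩ | ⟨h, hc⟩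
      · exact Or.inl ⟨h, by omega⟩
      · by_cases hc2 : 0 ≤ p - q ∧ p - q ≤ 1 ∧ p - q ≤ 2 * (n : ℤ) - r ∧
            1 - (p - q) ≤ r
        · exact absurd ⟨by omega, by omega, by omega, by omega, by omega⟩ hc
        · exact Or.inr ⟨h, hc2⟩
    split_ifs <;> omega
  · have h1 := A1ZB_spec (n : ℤ) p r 0 q (s + 1)
    have h2 := A1ZB_spec (n : ℤ) p r 0 (q + 1) (s - 1)
    have h3 := A1ZB_spec (n : ℤ) p r 1 q s
    have e1 : A1ZB (n : ℤ) p r 0 q (s + 1) = 0 := by omega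
    have e2 : A1ZB (n : ℤ) p r 0 (q + 1) (s - 1) = 0 := by omega
    have e3 : A1ZB (n : ℤ) p r 1 q s = 0 := by omega
    split_ifs <;> omega

/-- The mesh recursion for the `ℤA_{2n+1}` hammock indicator: exact except for a
single defect at `k = 2n`, `(q,s) = τ⁻¹(p-2n+r, 2n-r)`. -/
lemma keyA (n : ℕ) (p r : ℤ) (hr0 : 0 ≤ r) (hr2 : r ≤ 2 * (n : ℤ)) (k : ℕ) (q s : ℤ)
    (hs0 : 0 ≤ s) (hs2 : s ≤ 2 * (n : ℤ)) :
    (if s < 2 * (n : ℤ) then A1ZB n p r (k + 1) q (s + 1) else 0) +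
      (if 0 < s then A1ZB n p r (k + 1) (q + 1) (s - 1) else 0) -
        A1ZB n p r k (q + 1) s =
      A1ZB n p r (k + 2) q s -
        (if (k : ℤ) = 2 * n ∧ q = p - 2 * n + r - 1 ∧ s = 2 * n - r then 1
          else 0) := by
  by_cases hd : s = r + 2 * (p - q) - (k : ℤ) - 2
  · have h1 : A1ZB (n : ℤ) p r (k + 1) q (s + 1) = 1 ∧
          ((k : ℤ) + 1 - r ≤ p - q ∧ p - q ≤ (k : ℤ) + 1 ∧
            p - q ≤ 2 * (n : ℤ) - r ∧ 0 ≤ p - q) ∨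
        A1ZB (n : ℤ) p r (k + 1) q (s + 1) = 0 ∧
          ¬((k : ℤ) + 1 - r ≤ p - q ∧ p - q ≤ (k : ℤ) + 1 ∧
            p - q ≤ 2 * (n : ℤ) - r ∧ 0 ≤ p - q) := by
      rcases A1ZB_spec (n : ℤ) p r (k + 1) q (s + 1) with ⟨h, hc⟩ | ⟨h, hc⟩
      · exact Or.inl ⟨h, by omega⟩
      · by_cases hc2 : (k : ℤ) + 1 - r ≤ p - q ∧ p - q ≤ (k : ℤ) + 1 ∧
            p - q ≤ 2 * (n : ℤ) - r ∧ 0 ≤ p - q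
        · exact absurd ⟨by omega, by omega, by omega, by omega, by omega⟩ hc
        · exact Or.inr ⟨h, hc2⟩
    have h2 : A1ZB (n : ℤ) p r (k + 1) (q + 1) (s - 1) = 1 ∧
          ((k : ℤ) + 2 - r ≤ p - q ∧ p - q ≤ (k : ℤ) + 2 ∧
            p - q ≤ 2 * (n : ℤ) - r + 1 ∧ 1 ≤ p - q) ∨
        A1ZB (n : ℤ) p r (k + 1) (q + 1) (s - 1) = 0 ∧
          ¬((k : ℤ) + 2 - r ≤ p - q ∧ p - q ≤ (k : ℤ) + 2 ∧
            p - q ≤ 2 * (n : ℤ) - r + 1 ∧ 1 ≤ p - q) := by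
      rcases A1ZB_spec (n : ℤ) p r (k + 1) (q + 1) (s - 1) with ⟨h, hc⟩ | ⟨h, hc⟩
      · exact Or.inl ⟨h, by omega⟩
      · by_cases hc2 : (k : ℤ) + 2 - r ≤ p - q ∧ p - q ≤ (k : ℤ) + 2 ∧
            p - q ≤ 2 * (n : ℤ) - r + 1 ∧ 1 ≤ p - q
        · exact absurd ⟨by omega, by omega, by omega, by omega, by omega⟩ hc
        · exact Or.inr ⟨h, hc2⟩
    have h3 : A1ZB (n : ℤ) p r k (q + 1) s = 1 ∧
          ((k : ℤ) + 1 - r ≤ p - q ∧ p - q ≤ (k : ℤ) + 1 ∧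
            p - q ≤ 2 * (n : ℤ) - r + 1 ∧ 1 ≤ p - q) ∨
        A1ZB (n : ℤ) p r k (q + 1) s = 0 ∧
          ¬((k : ℤ) + 1 - r ≤ p - q ∧ p - q ≤ (k : ℤ) + 1 ∧
            p - q ≤ 2 * (n : ℤ) - r + 1 ∧ 1 ≤ p - q) := by
      rcases A1ZB_spec (n : ℤ) p r k (q + 1) s with ⟨h, hc⟩ | ⟨h, hc⟩
      · exact Or.inl ⟨h, by omega⟩
      · by_cases hc2 : (k : ℤ) + 1 - r ≤ p - q ∧ p - q ≤ (k : ℤ) + 1 ∧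
            p - q ≤ 2 * (n : ℤ) - r + 1 ∧ 1 ≤ p - q
        · exact absurd ⟨by omega, by omega, by omega, by omega, by omega⟩ hc
        · exact Or.inr ⟨h, hc2⟩
    have h4 : A1ZB (n : ℤ) p r (k + 2) q s = 1 ∧
          ((k : ℤ) + 2 - r ≤ p - q ∧ p - q ≤ (k : ℤ) + 2 ∧
            p - q ≤ 2 * (n : ℤ) - r ∧ 0 ≤ p - q) ∨
        A1ZB (n : ℤ) p r (k + 2) q s = 0 ∧
          ¬((k : ℤ) + 2 - r ≤ p - q ∧ p - q ≤ (k : ℤ) + 2 ∧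
            p - q ≤ 2 * (n : ℤ) - r ∧ 0 ≤ p - q) := by
      rcases A1ZB_spec (n : ℤ) p r (k + 2) q s with ⟨h, hc⟩ | ⟨h, hc⟩
      · exact Or.inl ⟨h, by omega⟩
      · by_cases hc2 : (k : ℤ) + 2 - r ≤ p - q ∧ p - q ≤ (k : ℤ) + 2 ∧
            p - q ≤ 2 * (n : ℤ) - r ∧ 0 ≤ p - q
        · exact absurd ⟨by omega, by omega, by omega, by omega, by omega⟩ hc
        · exact Or.inr ⟨h, hc2⟩
    split_ifs <;> omega
  · have h1 := A1ZB_spec (n : ℤ) p r (k + 1) q (s + 1)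
    have h2 := A1ZB_spec (n : ℤ) p r (k + 1) (q + 1) (s - 1)
    have h3 := A1ZB_spec (n : ℤ) p r k (q + 1) s
    have h4 := A1ZB_spec (n : ℤ) p r (k + 2) q s
    have e1 : A1ZB (n : ℤ) p r (k + 1) q (s + 1) = 0 := by omega
    have e2 : A1ZB (n : ℤ) p r (k + 1) (q + 1) (s - 1) = 0 := by omega
    have e3 : A1ZB (n : ℤ) p r k (q + 1) s = 0 := by omega
    have e4 : A1ZB (n : ℤ) p r (k + 2) q s = 0 := by omega
    split_ifs <;> omega

/-- Folded closed formula on `ℤB_{n+1}`, with `ℤ`-valued level coordinate. -/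
def FZBI (n : ℕ) (p : ℤ) (r : ℕ) (k q t : ℤ) : ℤ :=
  A1ZB n p r k q t +
    (if t < (n : ℤ) then A1ZB n p r k (q + t - (n : ℤ)) (2 * (n : ℤ) - t) else 0)

lemma FZBI_nonneg (n : ℕ) (p : ℤ) (r : ℕ) (k q t : ℤ) : 0 ≤ FZBI n p r k q t := by
  have h1 := A1ZB_nonneg (n : ℤ) p (r : ℤ) k q t
  have h2 := A1ZB_nonneg (n : ℤ) p (r : ℤ) k (q + t - (n : ℤ)) (2 * (n : ℤ) - t)
  unfold FZBI
  split_ifs <;> omega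

/-- Folded closed formula on `ℤB_{n+1}`. -/
def FZB (n : ℕ) (p : ℤ) (r k : ℕ) (q : ℤ) (s : ℕ) : ℤ :=
  FZBI n p r k q s

lemma FZB_nonneg (n : ℕ) (p : ℤ) (r k : ℕ) (q : ℤ) (s : ℕ) : 0 ≤ FZB n p r k q s :=
  FZBI_nonneg n p r k q s

/-- The explicit step expression built from the closed formula. -/
def stepFZB (n : ℕ) (p : ℤ) (r k : ℕ) (q : ℤ) (s : ℕ) : ℤ :=
  (if s < n then (if s = n - 1 then 2 else 1) * FZBI n p r k q ((s : ℤ) + 1)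
    else 0) +
    (if 0 < s then FZBI n p r k (q + 1) ((s : ℤ) - 1) else 0)

lemma stepB_eq_stepFZB (n : ℕ) (x : ℤ × ℕ) (p : ℤ) (r k : ℕ) (q : ℤ) (s : ℕ)
    (hs : s ≤ n)
    (hf : ∀ q' s', s' ≤ n → ((hB n x k (q', s') : ℕ) : ℤ) = FZB n p r k q' s') :
    stepB n (hB n x k) (q, s) = stepFZB n p r k q s := by
  have c1 : (((s + 1 : ℕ) : ℤ)) = (s : ℤ) + 1 := by push_cast; ring
  show (if s < n then (if s = n - 1 then 2 else 1) *
      ((hB n x k (q, s + 1) : ℕ) : ℤ) else 0) +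
    (if 0 < s then ((hB n x k (q + 1, s - 1) : ℕ) : ℤ) else 0) = stepFZB n p r k q s
  unfold stepFZB
  by_cases h1 : s < n <;> by_cases h2 : 0 < s
  · have c2 : (((s - 1 : ℕ) : ℤ)) = (s : ℤ) - 1 := by omega
    rw [if_pos h1, if_pos h1, if_pos h2, if_pos h2, hf q (s + 1) (by omega),
      hf (q + 1) (s - 1) (by omega)]
    unfold FZB
    rw [c1, c2]
  · rw [if_pos h1, if_pos h1, if_neg h2, if_neg h2, hf q (s + 1) (by omega)]
    unfold FZB
    rw [c1]
  · have c2 : (((s - 1 : ℕ) : ℤ)) = (s : ℤ) - 1 := by omega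
    rw [if_neg h1, if_neg h1, if_pos h2, if_pos h2, hf (q + 1) (s - 1) (by omega)]
    unfold FZB
    rw [c2]
  · rw [if_neg h1, if_neg h1, if_neg h2, if_neg h2]

/-- The degree-one mesh identity for the folded formula. -/
lemma keyZB_one (n : ℕ) (hn : 1 ≤ n) (p : ℤ) (r : ℕ) (hr : r ≤ n) (q : ℤ) (s : ℕ)
    (hs : s ≤ n) : stepFZB n p r 0 q s = FZB n p r 1 q s := by
  have hr0 : (0 : ℤ) ≤ (r : ℤ) := Int.natCast_nonneg r
  have hr2 : (r : ℤ) ≤ 2 * (n : ℤ) := by omega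
  have I1 := keyA0 n p r hr0 hr2 q (s : ℤ) (by omega) (by omega)
  by_cases hsn : s < n
  · have I2 := keyA0 n p r hr0 hr2 (q + (s : ℤ) - (n : ℤ)) (2 * (n : ℤ) - (s : ℤ))
      (by omega) (by omega)
    by_cases hw : s + 1 = n
    · obtain rfl : n = s + 1 := hw.symm
      unfold stepFZB FZB FZBI
      push_cast at I1 I2 ⊢
      simp only [if_pos hsn, if_pos (show s = s + 1 - 1 from by omega),
        if_neg (show ¬((s : ℤ) + 1 < (s : ℤ) + 1) from by omega),
        if_pos (show (s : ℤ) < (s : ℤ) + 1 from by omega),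
        if_pos (show (s : ℤ) - 1 < (s : ℤ) + 1 from by omega)]
      by_cases h0 : 0 < s
      · simp only [if_pos h0, if_pos (show (0 : ℤ) < (s : ℤ) from by omega)] at I1 I2 ⊢
        ring_nf at I1 I2 ⊢
        split_ifs at I1 I2 ⊢ <;> omega
      · simp only [if_neg h0, if_neg (show ¬((0 : ℤ) < (s : ℤ)) from by omega)] at I1 I2 ⊢
        ring_nf at I1 I2 ⊢
        split_ifs at I1 I2 ⊢ <;> omega
    · unfold stepFZB FZB FZBI
      push_cast at I1 I2 ⊢
      simp only [if_pos hsn, if_neg (show ¬(s = n - 1) from by omega),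
        if_pos (show (s : ℤ) + 1 < (n : ℤ) from by omega),
        if_pos (show (s : ℤ) < (n : ℤ) from by omega),
        if_pos (show (s : ℤ) - 1 < (n : ℤ) from by omega)]
      by_cases h0 : 0 < s
      · simp only [if_pos h0, if_pos (show (0 : ℤ) < (s : ℤ) from by omega)] at I1 I2 ⊢
        ring_nf at I1 I2 ⊢
        split_ifs at I1 I2 ⊢ <;> omega
      · simp only [if_neg h0, if_neg (show ¬((0 : ℤ) < (s : ℤ)) from by omega)] at I1 I2 ⊢
        ring_nf at I1 I2 ⊢
        split_ifs at I1 I2 ⊢ <;> omega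
  · obtain rfl : s = n := by omega
    unfold stepFZB FZB FZBI
    push_cast at I1 ⊢
    simp only [if_neg hsn, if_pos (show 0 < s from by omega),
      if_neg (show ¬((s : ℤ) < (s : ℤ)) from by omega),
      if_pos (show (s : ℤ) - 1 < (s : ℤ) from by omega)]
    ring_nf at I1 ⊢
    split_ifs at I1 ⊢ <;> omega

/-- The mesh identity for the folded formula: exact except for a single `-1`
defect at `k = 2n`, `(q,s) = (p-n-1, r)`. -/
lemma keyZB (n : ℕ) (hn : 1 ≤ n) (p : ℤ) (r : ℕ) (hr : r ≤ n) (k : ℕ) (q : ℤ)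
    (s : ℕ) (hs : s ≤ n) :
    stepFZB n p r (k + 1) q s - FZB n p r k (q + 1) s =
      FZB n p r (k + 2) q s -
        (if k = 2 * n ∧ q = p - (n : ℤ) - 1 ∧ s = r then 1 else 0) := by
  have hr0 : (0 : ℤ) ≤ (r : ℤ) := Int.natCast_nonneg r
  have hr2 : (r : ℤ) ≤ 2 * (n : ℤ) := by omega
  have I1 := keyA n p r hr0 hr2 k q (s : ℤ) (by omega) (by omega)
  by_cases hsn : s < n
  · have I2 := keyA n p r hr0 hr2 k (q + (s : ℤ) - (n : ℤ)) (2 * (n : ℤ) - (s : ℤ))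
      (by omega) (by omega)
    by_cases hw : s + 1 = n
    · obtain rfl : n = s + 1 := hw.symm
      unfold stepFZB FZB FZBI
      push_cast at I1 I2 ⊢
      simp only [if_pos hsn, if_pos (show s = s + 1 - 1 from by omega),
        if_neg (show ¬((s : ℤ) + 1 < (s : ℤ) + 1) from by omega),
        if_pos (show (s : ℤ) < (s : ℤ) + 1 from by omega),
        if_pos (show (s : ℤ) - 1 < (s : ℤ) + 1 from by omega)]
      by_cases h0 : 0 < s
      · simp only [if_pos h0, if_pos (show (0 : ℤ) < (s : ℤ) from by omega)] at I1 I2 ⊢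
        ring_nf at I1 I2 ⊢
        split_ifs at I1 I2 ⊢ <;> omega
      · simp only [if_neg h0, if_neg (show ¬((0 : ℤ) < (s : ℤ)) from by omega)] at I1 I2 ⊢
        ring_nf at I1 I2 ⊢
        split_ifs at I1 I2 ⊢ <;> omega
    · unfold stepFZB FZB FZBI
      push_cast at I1 I2 ⊢
      simp only [if_pos hsn, if_neg (show ¬(s = n - 1) from by omega),
        if_pos (show (s : ℤ) + 1 < (n : ℤ) from by omega),
        if_pos (show (s : ℤ) < (n : ℤ) from by omega),
        if_pos (show (s : ℤ) - 1 < (n : ℤ) from by omega)]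
      by_cases h0 : 0 < s
      · simp only [if_pos h0, if_pos (show (0 : ℤ) < (s : ℤ) from by omega)] at I1 I2 ⊢
        ring_nf at I1 I2 ⊢
        split_ifs at I1 I2 ⊢ <;> omega
      · simp only [if_neg h0, if_neg (show ¬((0 : ℤ) < (s : ℤ)) from by omega)] at I1 I2 ⊢
        ring_nf at I1 I2 ⊢
        split_ifs at I1 I2 ⊢ <;> omega
  · obtain rfl : s = n := by omega
    unfold stepFZB FZB FZBI
    push_cast at I1 ⊢
    simp only [if_neg hsn, if_pos (show 0 < s from by omega),
      if_neg (show ¬((s : ℤ) < (s : ℤ)) from by omega),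
      if_pos (show (s : ℤ) - 1 < (s : ℤ) from by omega)]
    ring_nf at I1 ⊢
    split_ifs at I1 ⊢ <;> omega

lemma FZB_gt (n : ℕ) (p : ℤ) (r k : ℕ) (q : ℤ) (s : ℕ) (hk : 2 * n < k) :
    FZB n p r k q s = 0 := by
  unfold FZB FZBI
  have h1 := A1ZB_spec (n : ℤ) p (r : ℤ) (k : ℤ) q (s : ℤ)
  have h2 := A1ZB_spec (n : ℤ) p (r : ℤ) (k : ℤ) (q + (s : ℤ) - (n : ℤ))
    (2 * (n : ℤ) - (s : ℤ))
  split_ifs <;> omega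

lemma FZB_2n (n : ℕ) (hn : 1 ≤ n) (p : ℤ) (r : ℕ) (hr : r ≤ n) (q : ℤ) (s : ℕ)
    (hs : s ≤ n) :
    FZB n p r (2 * n) q s = if q = p - (n : ℤ) ∧ s = r then 1 else 0 := by
  unfold FZB FZBI
  push_cast
  have h1 := A1ZB_spec (n : ℤ) p (r : ℤ) (2 * (n : ℤ)) q (s : ℤ)
  have h2 := A1ZB_spec (n : ℤ) p (r : ℤ) (2 * (n : ℤ)) (q + (s : ℤ) - (n : ℤ))
    (2 * (n : ℤ) - (s : ℤ))
  split_ifs <;> omega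

lemma hB_zero_eq (n : ℕ) (hn : 1 ≤ n) (p : ℤ) (r : ℕ) (hr : r ≤ n) (q : ℤ) (s : ℕ)
    (hs : s ≤ n) : ((hB n (p, r) 0 (q, s) : ℕ) : ℤ) = FZB n p r 0 q s := by
  simp only [hB, Prod.mk.injEq]
  rw [apply_ite (fun m : ℕ => (m : ℤ))]
  unfold FZB FZBI
  push_cast
  have h1 := A1ZB_spec (n : ℤ) p (r : ℤ) 0 q (s : ℤ)
  have h2 := A1ZB_spec (n : ℤ) p (r : ℤ) 0 (q + (s : ℤ) - (n : ℤ))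
    (2 * (n : ℤ) - (s : ℤ))
  split_ifs <;> omega

lemma hB_eq_FZB (n : ℕ) (hn : 1 ≤ n) (p : ℤ) (r : ℕ) (hr : r ≤ n) :
    ∀ k (q : ℤ) (s : ℕ), s ≤ n →
      ((hB n (p, r) k (q, s) : ℕ) : ℤ) = FZB n p r k q s := by
  intro k
  induction k using Nat.twoStepInduction with
  | zero => exact fun q s hs => hB_zero_eq n hn p r hr q s hs
  | one =>
    intro q s hs
    have hstep : stepB n (hB n (p, r) 0) (q, s) = stepFZB n p r 0 q s :=
      stepB_eq_stepFZB n (p, r) p r 0 q s hs fun q' s' hs' =>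
        hB_zero_eq n hn p r hr q' s' hs'
    have h1 : hB n (p, r) 1 (q, s) = (stepFZB n p r 0 q s).toNat := by
      simp only [hB]
      rw [show (stepB n (fun y => if y = ((p, r) : ℤ × ℕ) then 1 else 0) (q, s)) =
        stepB n (hB n (p, r) 0) (q, s) from rfl, hstep]
    rw [h1, keyZB_one n hn p r hr q s hs,
      Int.toNat_of_nonneg (FZB_nonneg n p r 1 q s)]
  | more k ih ih1 =>
    intro q s hs
    have hstep : stepB n (hB n (p, r) (k + 1)) (q, s) = stepFZB n p r (k + 1) q s :=
      stepB_eq_stepFZB n (p, r) p r (k + 1) q s hs fun q' s' hs' => ih1 q' s' hs'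
    have hk : ((hB n (p, r) k (q + 1, s) : ℕ) : ℤ) = FZB n p r k (q + 1) s :=
      ih (q + 1) s hs
    have h1 : hB n (p, r) (k + 2) (q, s) =
        (stepFZB n p r (k + 1) q s - FZB n p r k (q + 1) s).toNat := by
      simp only [hB]
      rw [show ((q, s).1 + 1, (q, s).2) = (q + 1, s) from rfl, hstep, hk]
    rw [h1, keyZB n hn p r hr k q s hs]
    by_cases hex : k = 2 * n ∧ q = p - (n : ℤ) - 1 ∧ s = r
    · rw [if_pos hex, FZB_gt n p r (k + 2) q s (by omega)]
      rfl
    · rw [if_neg hex, sub_zero,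
        Int.toNat_of_nonneg (FZB_nonneg n p r (k + 2) q s)]

/-- Proposition 5.1 for type `B`: for a vertex `x = (p,r)` of `ℤB_{n+1}`,
(i) `h'_k(y,x) ≥ 0` for all vertices `y` and `1 ≤ k ≤ 2n` (hence `h_k = h'_k` there);
(ii) `h_{2n}(y,x) = 1` if `y = (p-n, r)` and `h_{2n}(y,x) = 0` otherwise;
(iii) `h_k(y,x) = 0` for all vertices `y` and all `k > 2n`. -/
theorem h_vanishing_ZB (n : ℕ) (hn : 1 ≤ n) (p : ℤ) (r : ℕ) (hr : r ≤ n) :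
    (∀ (q : ℤ) (s : ℕ), s ≤ n → ∀ k : ℕ, 1 ≤ k → k ≤ 2 * n →
      0 ≤ h'B n (p, r) k (q, s) ∧
        (hB n (p, r) k (q, s) : ℤ) = h'B n (p, r) k (q, s)) ∧
      (∀ (q : ℤ) (s : ℕ), s ≤ n →
        hB n (p, r) (2 * n) (q, s) =
          if (q, s) = (p - (n : ℤ), r) then 1 else 0) ∧
      ∀ (q : ℤ) (s : ℕ), s ≤ n → ∀ k : ℕ, 2 * n < k → hB n (p, r) k (q, s) = 0 := by
  refine ⟨?_, ?_, ?_⟩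
  · intro q s hs k hk1 hk2
    match k, hk1 with
    | 1, _ =>
      have hstep : stepB n (hB n (p, r) 0) (q, s) = stepFZB n p r 0 q s :=
        stepB_eq_stepFZB n (p, r) p r 0 q s hs fun q' s' hs' =>
          hB_zero_eq n hn p r hr q' s' hs'
      have h1 : h'B n (p, r) 1 (q, s) = stepFZB n p r 0 q s := by
        unfold h'B
        rw [if_neg (by omega : ¬(2 ≤ 1)), sub_zero]
        exact hstep
      rw [h1, keyZB_one n hn p r hr q s hs]
      exact ⟨FZB_nonneg n p r 1 q s, hB_eq_FZB n hn p r hr 1 q s hs⟩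
    | (j + 2), _ =>
      have hstep : stepB n (hB n (p, r) (j + 1)) (q, s) = stepFZB n p r (j + 1) q s :=
        stepB_eq_stepFZB n (p, r) p r (j + 1) q s hs fun q' s' hs' =>
          hB_eq_FZB n hn p r hr (j + 1) q' s' hs'
      have h1 : h'B n (p, r) (j + 2) (q, s) =
          stepFZB n p r (j + 1) q s - FZB n p r j (q + 1) s := by
        unfold h'B
        rw [if_pos (by omega : 2 ≤ j + 2)]
        show stepB n (hB n (p, r) (j + 1)) (q, s) -
          ((hB n (p, r) j (q + 1, s) : ℕ) : ℤ) = _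
        rw [hstep, hB_eq_FZB n hn p r hr j (q + 1) s hs]
      have hex : ¬(j = 2 * n ∧ q = p - (n : ℤ) - 1 ∧ s = r) := by
        intro ⟨a, _⟩
        omega
      rw [h1, keyZB n hn p r hr j q s hs, if_neg hex, sub_zero]
      exact ⟨FZB_nonneg n p r (j + 2) q s, hB_eq_FZB n hn p r hr (j + 2) q s hs⟩
  · intro q s hs
    have h1 := hB_eq_FZB n hn p r hr (2 * n) q s hs
    rw [FZB_2n n hn p r hr q s hs] at h1
    simp only [Prod.mk.injEq]
    split_ifs at h1 ⊢ with h h' <;> omega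
  · intro q s hs k hk
    have h1 := hB_eq_FZB n hn p r hr k q s hs
    rw [FZB_gt n p r k q s hk] at h1
    omega
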